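/- Every iterated wreath product of cyclic groups W = C_{p_k} ≀ ⋯ ≀ C_{p_1} with k ≥ 2 factors has commutator width exactly 1, i.e., every element of the commutator subgroup of W is a single commutator. -/

import Mathlib

/-- The cyclic shift action of `C_p = ZMod p` on the direct power `B^p`. -/
def cycShift (B : Type*) [Group B] (p : ℕ) :
    Multiplicative (ZMod p) →* MulAut (ZMod p → B) where
  toFun k := MulEquiv.arrowCongr (Equiv.addRight (Multiplicative.toAdd k)) (MulEquiv.refl B)
  map_one' := by
    ext f i
    simp [MulEquiv.arrowCongr]
    rfl
  map_mul' a b := by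
    ext f i
    simp only [MulEquiv.arrowCongr, Equiv.coe_addRight, MulEquiv.coe_mk, Equiv.coe_fn_mk,
      MulEquiv.refl_apply, toAdd_mul, MulAut.mul_apply]
    congr 1
    simp only [Equiv.addRight_symm, Equiv.coe_addRight]
    abel

/-- The permutational wreath product `B ≀ C_p` with `C_p` acting on `p` points by cyclic shift. -/
abbrev Wr (B : Type*) [Group B] (p : ℕ) : Type _ :=
  (ZMod p → B) ⋊[cycShift B p] Multiplicative (ZMod p)

/-- The iterated permutational wreath product `C_{p_k} ≀ ⋯ ≀ C_{p_1}`: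
`iterWr p₁ [p₂, …, p_k]` has `C_{p₁}` as its top active group. -/
def iterWr : ℕ → List ℕ → GrpCat
  | p, [] => GrpCat.of (Multiplicative (ZMod p))
  | p, q :: l => GrpCat.of (Wr (iterWr q l) p)

open scoped commutatorElement

variable {B : Type*} [Group B]

/-- suffix products: `sufP f n m = f n * f (n+1) * ⋯ * f (n+m-1)` -/
def sufP (f : ℕ → B) : ℕ → ℕ → B
  | _, 0 => 1
  | n, m + 1 => f n * sufP f (n + 1) m

lemma sufP_abel (f : ℕ → B) :
    ∀ (m n : ℕ), Abelianization.of (sufP f n m)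
      = ∏ j ∈ Finset.range m, Abelianization.of (f (n + j))
  | 0, n => by simp [sufP]
  | m + 1, n => by
    rw [sufP, map_mul, sufP_abel f m (n + 1), Finset.prod_range_succ', mul_comm]
    congr 1
    exact Finset.prod_congr rfl fun j _ => by ring_nf

lemma cycShift_apply (p : ℕ) (k : Multiplicative (ZMod p)) (w : ZMod p → B) (i : ZMod p) :
    cycShift B p k w i = w (i - Multiplicative.toAdd k) := by
  show w ((Equiv.addRight (Multiplicative.toAdd k)).symm i) = _
  simp [Equiv.addRight_symm, sub_eq_add_neg]

/-- abelianization-type homomorphism of the wreath product -/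
def wrAb (p : ℕ) [NeZero p] :
    Wr B p →* Multiplicative (ZMod p) × Abelianization B where
  toFun w := (w.right, ∏ i : ZMod p, Abelianization.of (w.left i))
  map_one' := by simp
  map_mul' u v := by
    have key : ∏ i : ZMod p, Abelianization.of ((cycShift B p u.right v.left) i)
        = ∏ i : ZMod p, Abelianization.of (v.left i) :=
      Fintype.prod_equiv ((Equiv.addRight (Multiplicative.toAdd u.right)).symm)
        _ _ (fun i => rfl)
    ext
    · simp
    · simp only [SemidirectProduct.mul_left, Pi.mul_apply, Prod.snd_mul, map_mul]
      rw [Finset.prod_mul_distrib, key]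

lemma wr_step (p : ℕ) (hp : 2 ≤ p)
    (IH : ∀ b ∈ commutator B, ∃ x y : B, b = ⁅x, y⁆) :
    ∀ g ∈ commutator (Wr B p), ∃ a b : Wr B p, g = ⁅a, b⁆ := by
  haveI : NeZero p := ⟨by omega⟩
  rintro ⟨f, r⟩ hg
  have hker : wrAb (B := B) p ⟨f, r⟩ = 1 :=
    Abelianization.commutator_subset_ker (wrAb p) hg
  rw [Prod.ext_iff] at hker
  obtain ⟨hr, hprod⟩ := hker
  have hr' : r = 1 := hr
  subst hr'
  have hprod' : ∏ i : ZMod p, Abelianization.of (f i) = 1 := hprod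
  clear hprod hg hr
  set F : ℕ → B := fun j => f ((j : ℕ) : ZMod p) with hF
  set T : ℕ → B := fun n => sufP F n (p - n) with hTdef
  have hT : ∀ n, n < p → T n = F n * T (n + 1) := by
    intro n hn
    show sufP F n (p - n) = F n * sufP F (n + 1) (p - (n + 1))
    rw [show p - n = (p - (n + 1)) + 1 from by omega]
    rfl
  have hTp : T p = 1 := by
    show sufP F p (p - p) = 1
    rw [Nat.sub_self]
    rfl
  have hof : Abelianization.of (T 0) = 1 := by
    show Abelianization.of (sufP F 0 (p - 0)) = 1
    rw [Nat.sub_zero, sufP_abel]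
    rw [← hprod']
    refine Finset.prod_bij' (fun j _ => ((j : ℕ) : ZMod p)) (fun i _ => i.val)
      (fun j hj => Finset.mem_univ _) (fun i _ => Finset.mem_range.2 (ZMod.val_lt i))
      ?_ ?_ ?_
    · intro j hj
      exact ZMod.val_cast_of_lt (Finset.mem_range.1 hj)
    · intro i _
      exact ZMod.natCast_rightInverse i
    · intro j _
      simp [hF]
  have hPc : T 0 ∈ commutator B := (QuotientGroup.eq_one_iff _).mp hof
  obtain ⟨h₀, x, hx⟩ := IH _ hPc
  set g : ZMod p → B := fun i => T (i.val + 1) * x with hg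
  set h : ZMod p → B := fun i => if i = 0 then h₀ else 1 with hh
  refine ⟨⟨h, Multiplicative.ofAdd 1⟩, ⟨g, 1⟩, ?_⟩
  have key : ∀ i : ZMod p, f i = h i * g (i - 1) * (h i)⁻¹ * (g i)⁻¹ := by
    intro i
    by_cases hi : i = 0
    · subst hi
      have hm1 : ((0 : ZMod p) - 1) = (((p - 1 : ℕ) : ℕ) : ZMod p) := by
        have h1 : ((p : ℕ) : ZMod p) = 0 := ZMod.natCast_self p
        rw [Nat.cast_sub (by omega : 1 ≤ p), h1]
        ring
      have hv : ((0 : ZMod p) - 1).val = p - 1 := by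
        rw [hm1, ZMod.val_cast_of_lt (by omega)]
      have hg1 : g ((0 : ZMod p) - 1) = x := by
        rw [hg]
        simp only [hv]
        rw [show p - 1 + 1 = p from by omega, hTp, one_mul]
      have hg0 : g (0 : ZMod p) = T 1 * x := by
        rw [hg]; simp [ZMod.val_zero]
      have hT0 : T 0 = f 0 * T 1 := by
        have := hT 0 (by omega)
        simpa [hF] using this
      have hf0 : f 0 = T 0 * (T 1)⁻¹ := by rw [hT0]; group
      have hh0 : h (0 : ZMod p) = h₀ := by rw [hh]; simp
      rw [hg1, hg0, hh0, hf0, hx]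
      group
    · have hval : 1 ≤ i.val := by
        rcases Nat.eq_zero_or_pos i.val with h0 | h1
        · exact absurd ((ZMod.val_eq_zero i).mp h0) hi
        · exact h1
      have hvlt : i.val < p := ZMod.val_lt i
      have him : i - 1 = ((i.val - 1 : ℕ) : ZMod p) := by
        conv_lhs => rw [← ZMod.natCast_rightInverse i]
        rw [Nat.cast_sub hval]
        push_cast
        ring
      have hv : (i - 1).val = i.val - 1 := by
        rw [him, ZMod.val_cast_of_lt (by omega)]
      have hgm : g (i - 1) = T i.val * x := by
        rw [hg]
        simp only [hv]
        rw [show i.val - 1 + 1 = i.val from by omega]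
      have hTi : T i.val = f i * T (i.val + 1) := by
        have := hT i.val hvlt
        rwa [show F i.val = f i from by rw [hF]; simp [ZMod.natCast_rightInverse i]] at this
      have hhi : h i = 1 := by rw [hh]; simp [hi]
      rw [hhi, hgm, hg, hTi]
      group
  apply SemidirectProduct.ext
  · show f = _
    funext i
    rw [key i]
    simp only [commutatorElement_def, SemidirectProduct.mul_left, SemidirectProduct.mul_right,
      SemidirectProduct.inv_left, SemidirectProduct.inv_right, cycShift_apply, Pi.mul_apply,
      Pi.inv_apply, toAdd_ofAdd, toAdd_inv, toAdd_mul, toAdd_one]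
    group
  · show (1 : Multiplicative (ZMod p)) = _
    simp [commutatorElement_def]

lemma comm_case {A : Type*} [CommGroup A] : ∀ g ∈ commutator A, ∃ a b : A, g = ⁅a, b⁆ := by
  intro g hg
  have h1 : g = 1 := Abelianization.commutator_subset_ker (MonoidHom.id A) hg
  exact ⟨1, 1, by simp [h1]⟩

lemma wr_comm_ne_bot (p : ℕ) (hp : 2 ≤ p) (b₀ : B) (hb : b₀ ≠ 1) :
    commutator (Wr B p) ≠ ⊥ := by
  haveI : NeZero p := ⟨by omega⟩
  haveI : Fact (1 < p) := ⟨hp⟩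
  set gg : ZMod p → B := fun i => if i = 0 then b₀ else 1 with hgg
  set c : Wr B p := ⁅(⟨1, Multiplicative.ofAdd 1⟩ : Wr B p), ⟨gg, 1⟩⁆ with hc
  have hmem : c ∈ commutator (Wr B p) :=
    Subgroup.commutator_mem_commutator (Subgroup.mem_top _) (Subgroup.mem_top _)
  have hval : c.left (1 : ZMod p) = b₀ := by
    simp only [hc, commutatorElement_def, SemidirectProduct.mul_left,
      SemidirectProduct.mul_right, SemidirectProduct.inv_left, SemidirectProduct.inv_right,
      cycShift_apply, Pi.mul_apply, Pi.inv_apply, Pi.one_apply,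
      toAdd_ofAdd, toAdd_inv, toAdd_mul, toAdd_one]
    rw [hgg]
    norm_num
  have hne : c ≠ 1 := by
    intro h
    rw [h] at hval
    exact hb (by simpa using hval.symm)
  intro hbot
  rw [hbot, Subgroup.mem_bot] at hmem
  exact hne hmem

lemma cwAux : ∀ (l : List ℕ), (∀ q ∈ l, 2 ≤ q) → ∀ p : ℕ, 2 ≤ p →
    ∀ g ∈ commutator (iterWr p l), ∃ a b : (iterWr p l), g = ⁅a, b⁆
  | [], _, p, _ => comm_case (A := Multiplicative (ZMod p))
  | q :: l, hl, p, hp =>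
      wr_step p hp (cwAux l (fun r hr => hl r (List.mem_cons_of_mem _ hr)) q
        (hl q List.mem_cons_self))

lemma exists_ne_one_iterWr : ∀ (l : List ℕ) (p : ℕ), 2 ≤ p → ∃ z : iterWr p l, z ≠ 1
  | [], p, hp => by
    haveI : NeZero p := ⟨by omega⟩
    haveI : Fact (1 < p) := ⟨hp⟩
    show ∃ z : Multiplicative (ZMod p), z ≠ 1
    refine ⟨Multiplicative.ofAdd (1 : ZMod p), fun h => ?_⟩
    have := congrArg Multiplicative.toAdd h
    simp only [toAdd_ofAdd, toAdd_one] at this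
    exact one_ne_zero this
  | q :: l, p, hp => by
    haveI : NeZero p := ⟨by omega⟩
    haveI : Fact (1 < p) := ⟨hp⟩
    show ∃ z : Wr (iterWr q l) p, z ≠ 1
    refine ⟨(⟨1, Multiplicative.ofAdd (1 : ZMod p)⟩ : Wr (iterWr q l) p), fun h => ?_⟩
    have hr := congrArg SemidirectProduct.right h
    have := congrArg Multiplicative.toAdd hr
    simp only [toAdd_ofAdd, toAdd_one] at this
    exact one_ne_zero this


/-- every iterated wreath product of (at least two) cyclic groups of
orders ≥ 2 has commutator width exactly 1: every element of its commutator subgroup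
is a single commutator, and its commutator subgroup is nontrivial. -/
theorem cw_iterWr_eq_one (p : ℕ) (l : List ℕ) (hp : 2 ≤ p) (hl : ∀ q ∈ l, 2 ≤ q)
    (hne : l ≠ []) :
    (∀ g ∈ commutator (iterWr p l), ∃ a b : (iterWr p l), g = ⁅a, b⁆) ∧
      commutator (iterWr p l) ≠ ⊥ := by
  obtain ⟨q, l', rfl⟩ : ∃ q l', l = q :: l' := by
    cases l with
    | nil => exact absurd rfl hne
    | cons q l' => exact ⟨q, l', rfl⟩
  refine ⟨cwAux _ hl p hp, ?_⟩
  obtain ⟨b₀, hb⟩ := exists_ne_one_iterWr l' q (hl q List.mem_cons_self)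
  exact wr_comm_ne_bot p hp b₀ hb
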